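/- Let q be a prime power, m ≥ 1, ℓ ≤ q − 1, and let (n_1, …, n_ℓ) be an ordered partition of n with n_l ≤ m for all l; let 1 ≤ k ≤ n. Let a_1, …, a_ℓ ∈ F_{q^m} be nonzero and pairwise non-σ-conjugate, and for each l let β_{l,1}, …, β_{l,n_l} ∈ F_{q^m} be linearly independent over F_q. Let G^LRS ∈ F_{q^m}^{k×n} be the matrix with entry a_l^{(q^i−1)/(q−1)} · β_{l,t}^{q^i} in row i ∈ {0, …, k−1} and column φ(l,t) := t + n_1 + ⋯ + n_{l−1}. Then the row space of G^LRS is a k-dimensional linear code over F_{q^m} whose minimum sum-rank distance with respect to the partition (n_1, …, n_ℓ) equals n − k + 1; i.e., linearized Reed–Solomon codes are maximum sum-rank distance (MSRD) codes. -/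

import Mathlib

set_option linter.unusedSectionVars false
set_option linter.deprecated false


/-- The `F_q`-rank of a vector over `F_{q^m}`. -/
noncomputable def rankFq (Fq : Type*) {K : Type*} [Field Fq] [Field K] [Algebra Fq K]
    {ι : Type*} (y : ι → K) : ℕ :=
  Module.finrank Fq (Submodule.span Fq (Set.range y))

/-- The sum-rank weight with respect to the ordered partition `(n_1, …, n_ℓ)`. -/
noncomputable def sumRankWt (Fq : Type*) {K : Type*} [Field Fq] [Field K] [Algebra Fq K]
    {ℓ : ℕ} {nn : Fin ℓ → ℕ} (x : ((l : Fin ℓ) × Fin (nn l)) → K) : ℕ :=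
  ∑ l : Fin ℓ, rankFq Fq (fun t : Fin (nn l) => x ⟨l, t⟩)

open Finset Polynomial

section LRS
variable {Fq K : Type*} [Field Fq] [Fintype Fq] [Field K] [Algebra Fq K]

local notation "qq" => Fintype.card Fq

lemma frob_add (x y : K) : (x + y) ^ qq = x ^ qq + y ^ qq := by
  obtain ⟨n, hp, hcard⟩ := FiniteField.card Fq (ringChar Fq)
  haveI : CharP K (ringChar Fq) :=
    charP_of_injective_algebraMap (algebraMap Fq K).injective _
  haveI := Fact.mk hp
  rw [hcard]
  exact add_pow_char_pow ..

lemma frob_algebraMap (s : Fq) : (algebraMap Fq K s) ^ qq = algebraMap Fq K s := by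
  rw [← map_pow, FiniteField.pow_card]

/-- Fixed points of `x ↦ x^q` lie in the image of `Fq`. -/
lemma fixed_mem_range {t : K} (ht : t ^ qq = t) : ∃ s : Fq, algebraMap Fq K s = t := by
  classical
  by_contra hcon
  push_neg at hcon
  set p : K[X] := X ^ qq - X with hp
  have hpne : p ≠ 0 := FiniteField.X_pow_card_sub_X_ne_zero K Fintype.one_lt_card
  have hdeg : p.natDegree = qq := FiniteField.X_pow_card_sub_X_natDegree_eq K Fintype.one_lt_card
  have hroot : ∀ x : K, x ^ qq = x → x ∈ p.roots := by
    intro x hx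
    rw [Polynomial.mem_roots hpne]
    simp [hp, IsRoot, hx]
  set s : Finset K := (Finset.univ.image (algebraMap Fq K)) with hs
  have hcards : s.card = qq := by
    rw [hs, Finset.card_image_of_injective _ (algebraMap Fq K).injective, Finset.card_univ]
  have htns : t ∉ s := by
    simp only [hs, Finset.mem_image] at *
    rintro ⟨c, -, hc⟩; exact hcon c hc
  have hsub : (insert t s).val ≤ p.roots := by
    rw [Finset.val_le_iff_val_subset]
    intro x hx
    simp only [Finset.mem_val, Finset.mem_insert, hs, Finset.mem_image] at hx
    rcases hx with rfl | ⟨c, -, rfl⟩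
    · exact hroot _ ht
    · exact hroot _ (frob_algebraMap c)
  have h1 := Multiset.card_le_card hsub
  have h3 : Multiset.card (insert t s).val = qq + 1 := by
    show (insert t s).card = qq + 1
    rw [Finset.card_insert_of_notMem htns, hcards]
  have h2 := Polynomial.card_roots' p
  omega

lemma frob_smul (c : Fq) (x : K) : (c • x) ^ qq = c • x ^ qq := by
  rw [Algebra.smul_def, Algebra.smul_def, mul_pow, frob_algebraMap]

/-- The `q`-power Frobenius as an `Fq`-linear endomorphism of `K`. -/
noncomputable def frobL : Module.End Fq K where
  toFun x := x ^ qq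
  map_add' := frob_add
  map_smul' := frob_smul

@[simp] lemma frobL_apply (x : K) : (frobL : Module.End Fq K) x = x ^ qq := rfl

lemma frobL_pow_apply (i : ℕ) : ∀ x : K, ((frobL : Module.End Fq K) ^ i) x = x ^ qq ^ i := by
  induction i with
  | zero => intro x; simp
  | succ n ih =>
      intro x
      rw [pow_succ, Module.End.mul_apply, frobL_apply, ih, ← pow_mul, ← pow_succ']

variable (Fq) in
/-- `Nrm i a = a^{1+q+⋯+q^{i-1}}`, the `i`-th truncated norm. -/
noncomputable def Nrm (i : ℕ) (a : K) : K := a ^ (∑ j ∈ Finset.range i, qq ^ j)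

@[simp] lemma Nrm_zero (a : K) : (Nrm Fq 0 a : K) = 1 := by simp [Nrm]

lemma Nrm_succ (i : ℕ) (a : K) : (Nrm Fq (i+1) a : K) = a * (Nrm Fq i a) ^ qq := by
  rw [Nrm, Nrm, ← pow_mul, Finset.sum_range_succ' (fun j => qq ^ j) i]
  simp only [pow_zero]
  rw [pow_add, pow_one, mul_comm]
  congr 2
  rw [Finset.sum_mul]
  exact Finset.sum_congr rfl (fun j _ => by rw [pow_succ])

lemma Nrm_mul_pow (i : ℕ) (a : K) : (Nrm Fq i a : K) * a ^ qq ^ i = Nrm Fq (i+1) a := by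
  rw [Nrm, Nrm, ← pow_add, Finset.sum_range_succ]

lemma Nrm_ne_zero {a : K} (haa : a ≠ 0) (i : ℕ) : (Nrm Fq i a : K) ≠ 0 := pow_ne_zero _ haa

variable (Fq) in
/-- The `Fq`-linear operator `x ↦ ∑_{i ≤ d} f i · Nrm i a · x^{q^i}`. -/
noncomputable def Lop (a : K) (f : ℕ → K) (d : ℕ) : Module.End Fq K :=
  ∑ i ∈ Finset.range (d+1),
    (LinearMap.mulLeft Fq (f i * Nrm Fq i a)) * (frobL : Module.End Fq K) ^ i

lemma Lop_apply (a : K) (f : ℕ → K) (d : ℕ) (x : K) :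
    (Lop Fq a f d : Module.End Fq K) x
      = ∑ i ∈ Finset.range (d+1), f i * Nrm Fq i a * x ^ qq ^ i := by
  rw [Lop, LinearMap.sum_apply]
  exact Finset.sum_congr rfl fun i _ => by
    rw [Module.End.mul_apply, frobL_pow_apply, LinearMap.mulLeft_apply]

variable (Fq) in
/-- Auxiliary top-down recursion for skew right-division by `X - c`. -/
noncomputable def divAux (c : K) (f : ℕ → K) (e : ℕ) : ℕ → K
  | 0 => f (e+1)
  | (j+1) => f (e - j) + divAux c f e j * c ^ (qq ^ (e - j))

variable (Fq) in
/-- Quotient coefficients of skew right-division of `f` (degree `e+1`) by `X - c`. -/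
noncomputable def gdiv (c : K) (f : ℕ → K) (e n : ℕ) : K :=
  if n ≤ e then divAux Fq c f e (e - n) else 0

lemma gdiv_top (c : K) (f : ℕ → K) (e n : ℕ) (h : e < n) : gdiv Fq c f e n = 0 := by
  rw [gdiv, if_neg (by omega)]

lemma gdiv_rec (c : K) (f : ℕ → K) (e n : ℕ) (hn : n ≤ e) :
    gdiv Fq c f e n = f (n+1) + gdiv Fq c f e (n+1) * c ^ (qq ^ (n+1)) := by
  by_cases h : n = e
  · subst h
    rw [gdiv, if_pos le_rfl, Nat.sub_self, divAux, gdiv_top c f n (n+1) (by omega)]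
    ring
  · have hlt : n < e := lt_of_le_of_ne hn h
    have h1 : e - n = (e - (n+1)) + 1 := by omega
    rw [gdiv, if_pos hn, h1, divAux]
    have h2 : e - (e - (n+1)) = n + 1 := by omega
    rw [h2, gdiv, if_pos (by omega : n + 1 ≤ e)]

lemma gdiv_coeff (c : K) (f : ℕ → K) (e : ℕ) (hf : ∀ i, e + 1 < i → f i = 0)
    (n : ℕ) :
    f (n+1) = gdiv Fq c f e n - gdiv Fq c f e (n+1) * c ^ (qq ^ (n+1)) := by
  by_cases hn : n ≤ e
  · rw [gdiv_rec c f e n hn]; ring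
  · rw [gdiv_top c f e n (by omega), gdiv_top c f e (n+1) (by omega),
      hf (n+1) (by omega)]
    ring

lemma gdiv_eq_zero_imp (c : K) (f : ℕ → K) (e : ℕ) (hf : ∀ i, e + 1 < i → f i = 0)
    (hg : ∀ n, gdiv Fq c f e n = 0) (hr : f 0 + gdiv Fq c f e 0 * c = 0) :
    ∀ n, f n = 0 := by
  intro n
  cases n with
  | zero => have := hr; rwa [hg 0, zero_mul, add_zero] at this
  | succ n => rw [gdiv_coeff (Fq := Fq) c f e hf n, hg, hg, zero_mul, sub_zero]

lemma frob_sub (x y : K) : (x - y) ^ qq = x ^ qq - y ^ qq := by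
  have := frob_add (Fq := Fq) (x - y) y
  rw [sub_add_cancel] at this
  rw [this]; ring

lemma frob_sub_pow (n : ℕ) (x y : K) : (x - y) ^ qq ^ n = x ^ qq ^ n - y ^ qq ^ n := by
  induction n generalizing x y with
  | zero => simp
  | succ m ih =>
      rw [pow_succ, pow_mul, pow_mul, pow_mul, ih, frob_sub]

/-- The operator factorization `L_f = L_g ∘ (D_a - c) + r` coming from skew division. -/
lemma Lop_factor (a c : K) (f : ℕ → K) (e : ℕ) (hf : ∀ i, e + 1 < i → f i = 0) :
    Lop Fq a f (e+1)
      = Lop Fq a (gdiv Fq c f e) e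
          * (LinearMap.mulLeft Fq a * (frobL : Module.End Fq K) - LinearMap.mulLeft Fq c)
        + LinearMap.mulLeft Fq (f 0 + gdiv Fq c f e 0 * c) := by
  set g := gdiv Fq c f e with hgdef
  apply LinearMap.ext
  intro x
  have hT : (LinearMap.mulLeft Fq a * (frobL : Module.End Fq K) - LinearMap.mulLeft Fq c) x
      = a * x ^ qq - c * x := by
    simp [Module.End.mul_apply]
  rw [LinearMap.add_apply, Module.End.mul_apply, hT, Lop_apply, Lop_apply,
    LinearMap.mulLeft_apply]
  have expand : ∀ n ∈ Finset.range (e+1),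
      g n * Nrm Fq n a * (a * x ^ qq - c * x) ^ qq ^ n
        = g n * Nrm Fq (n+1) a * x ^ qq ^ (n+1) - g n * c ^ qq ^ n * Nrm Fq n a * x ^ qq ^ n := by
    intro n _
    rw [frob_sub_pow, mul_pow, mul_pow, ← pow_mul,
      show qq * qq ^ n = qq ^ (n+1) from (pow_succ' qq n).symm, ← Nrm_mul_pow]
    ring
  rw [Finset.sum_congr rfl expand, Finset.sum_sub_distrib]
  -- now reindex
  have hS2 : ∑ n ∈ Finset.range (e+1), g n * c ^ qq ^ n * Nrm Fq n a * x ^ qq ^ n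
      = ∑ n ∈ Finset.range (e+2), g n * c ^ qq ^ n * Nrm Fq n a * x ^ qq ^ n := by
    rw [Finset.sum_range_succ (n := e+1)]
    have hz : g (e+1) = 0 := by rw [hgdef]; exact gdiv_top c f e (e+1) (by omega)
    rw [hz]
    ring
  have hL : ∑ n ∈ Finset.range (e+2), f n * Nrm Fq n a * x ^ qq ^ n
      = (∑ n ∈ Finset.range (e+1), f (n+1) * Nrm Fq (n+1) a * x ^ qq ^ (n+1))
        + f 0 * x := by
    rw [Finset.sum_range_succ' (fun n => f n * Nrm Fq n a * x ^ qq ^ n) (e+1)]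
    simp
  have hS2' : ∑ n ∈ Finset.range (e+2), g n * c ^ qq ^ n * Nrm Fq n a * x ^ qq ^ n
      = (∑ n ∈ Finset.range (e+1), g (n+1) * c ^ qq ^ (n+1) * Nrm Fq (n+1) a * x ^ qq ^ (n+1))
        + g 0 * c * x := by
    rw [Finset.sum_range_succ' (fun n => g n * c ^ qq ^ n * Nrm Fq n a * x ^ qq ^ n) (e+1)]
    simp
  rw [hS2, hL, hS2']
  have key : ∀ n ∈ Finset.range (e+1),
      f (n+1) * Nrm Fq (n+1) a * x ^ qq ^ (n+1)
        = g n * Nrm Fq (n+1) a * x ^ qq ^ (n+1)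
          - g (n+1) * c ^ qq ^ (n+1) * Nrm Fq (n+1) a * x ^ qq ^ (n+1) := by
    intro n _
    rw [gdiv_coeff (Fq := Fq) c f e hf n, ← hgdef]
    ring
  rw [Finset.sum_congr rfl key, Finset.sum_sub_distrib]
  ring

section FD

variable [FiniteDimensional Fq K]

open Module

lemma finrank_ker_mul_le (A B : Module.End Fq K) :
    finrank Fq (LinearMap.ker (A * B))
      ≤ finrank Fq (LinearMap.ker A) + finrank Fq (LinearMap.ker B) := by
  have hmap : ∀ x ∈ LinearMap.ker (A * B), B x ∈ LinearMap.ker A := by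
    intro x hx
    simpa [LinearMap.mem_ker, Module.End.mul_apply] using hx
  let Bres : LinearMap.ker (A * B) →ₗ[Fq] LinearMap.ker A := B.restrict hmap
  have h1 := LinearMap.finrank_range_add_finrank_ker Bres
  have h2 : finrank Fq (LinearMap.range Bres) ≤ finrank Fq (LinearMap.ker A) :=
    (LinearMap.range Bres).finrank_le
  have h3 : finrank Fq (LinearMap.ker Bres) ≤ finrank Fq (LinearMap.ker B) := by
    have hinj := Submodule.injective_subtype (LinearMap.ker (A * B))
    have heq := LinearEquiv.finrank_eq
      (Submodule.equivMapOfInjective (LinearMap.ker (A * B)).subtype hinj (LinearMap.ker Bres))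
    rw [heq]
    apply Submodule.finrank_mono
    rintro y ⟨⟨x, hxmem⟩, hxker, rfl⟩
    have : B x = 0 := by
      have := congrArg (Subtype.val) (LinearMap.mem_ker.mp hxker)
      simpa [Bres, LinearMap.restrict_apply] using this
    simpa [LinearMap.mem_ker] using this
  have h4 : finrank Fq (LinearMap.ker (A * B)) = finrank Fq (⊤ : Submodule Fq (LinearMap.ker (A * B))) := by
    rw [finrank_top]
  omega

variable (Fq) in
/-- The twist operator `x ↦ b x^q - c x`. -/
noncomputable def Tw (b c : K) : Module.End Fq K :=
  LinearMap.mulLeft Fq b * (frobL : Module.End Fq K) - LinearMap.mulLeft Fq c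

lemma Tw_apply (b c x : K) : (Tw Fq b c) x = b * x ^ qq - c * x := by
  simp [Tw, Module.End.mul_apply]

lemma ker_tw_elem {b c x : K} (hx : x ≠ 0) (h : x ∈ LinearMap.ker (Tw Fq b c)) :
    c = b * x ^ (qq - 1) := by
  have hq1 : 1 ≤ qq := Fintype.card_pos
  have h0 : b * x ^ qq - c * x = 0 := by
    rw [← Tw_apply]; exact h
  have hxq : x ^ qq = x ^ (qq - 1) * x := by
    rw [← pow_succ, Nat.sub_add_cancel hq1]
  rw [hxq] at h0
  have h2 : b * x ^ (qq - 1) * x = c * x := by linear_combination sub_eq_zero.mp h0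
  exact (mul_right_cancel₀ hx h2).symm

lemma ker_tw_le_span {b u : K} (hb : b ≠ 0) (hu : u ≠ 0) :
    LinearMap.ker (Tw Fq b (b * u ^ (qq - 1))) ≤ Submodule.span Fq {u} := by
  intro x hx
  by_cases hx0 : x = 0
  · simp [hx0]
  · have hc := ker_tw_elem hx0 hx
    have hxu : x ^ (qq - 1) = u ^ (qq - 1) := (mul_left_cancel₀ hb hc).symm
    have hfix : (x / u) ^ qq = x / u := by
      have hq1 : 1 ≤ qq := Fintype.card_pos
      have : (x / u) ^ (qq - 1) = 1 := by
        rw [div_pow, hxu, div_self (pow_ne_zero _ hu)]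
      calc (x / u) ^ qq = (x / u) ^ (qq - 1) * (x / u) := by
            rw [← pow_succ, Nat.sub_add_cancel hq1]
        _ = x / u := by rw [this, one_mul]
    obtain ⟨s, hs⟩ := fixed_mem_range hfix
    have : x = s • u := by
      rw [Algebra.smul_def, hs, div_mul_cancel₀ _ hu]
    rw [this]
    exact Submodule.smul_mem _ _ (Submodule.mem_span_singleton_self u)

lemma rootBound {ℓ' : ℕ} (a : Fin ℓ' → K) (ha : ∀ l, a l ≠ 0)
    (hconj : ∀ l l', l ≠ l' → ∀ c : K, c ≠ 0 → a l ≠ c ^ (qq - 1) * a l') :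
    ∀ (d : ℕ) (f : ℕ → K), (∀ n, d < n → f n = 0) → (∃ n, f n ≠ 0) →
      ∑ l, finrank Fq (LinearMap.ker (Lop Fq (a l) f d)) ≤ d := by
  intro d
  induction d with
  | zero =>
    intro f hfd hfne
    have hf0 : f 0 ≠ 0 := by
      obtain ⟨n, hn⟩ := hfne
      cases n with
      | zero => exact hn
      | succ m => exact absurd (hfd (m+1) (by omega)) hn
    have hker : ∀ l, LinearMap.ker (Lop Fq (a l) f 0) = ⊥ := by
      intro l
      rw [LinearMap.ker_eq_bot']
      intro x hx
      rw [Lop_apply] at hx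
      rw [Finset.sum_range_one, Nrm_zero, mul_one, pow_zero, pow_one] at hx
      exact (mul_eq_zero.mp hx).resolve_left hf0
    have hz : ∀ l ∈ Finset.univ, finrank Fq (LinearMap.ker (Lop Fq (a l) f 0)) = 0 := by
      intro l _
      rw [hker l]
      exact finrank_bot Fq K
    rw [Finset.sum_congr rfl hz]
    simp
  | succ e ih =>
    intro f hfd hfne
    by_cases hker : ∀ l, LinearMap.ker (Lop Fq (a l) f (e+1)) = ⊥
    · have hz : ∀ l ∈ Finset.univ, finrank Fq (LinearMap.ker (Lop Fq (a l) f (e+1))) = 0 := by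
        intro l _
        rw [hker l]
        exact finrank_bot Fq K
      rw [Finset.sum_congr rfl hz]
      simp
    · push_neg at hker
      obtain ⟨l0, hl0⟩ := hker
      obtain ⟨u, hu_mem, hu_ne⟩ := Submodule.ne_bot_iff _ |>.mp hl0
      set c : K := a l0 * u ^ (qq - 1) with hcdef
      set g : ℕ → K := gdiv Fq c f e with hgdef
      have hfac : ∀ l, Lop Fq (a l) f (e+1)
          = Lop Fq (a l) g e * Tw Fq (a l) c
            + LinearMap.mulLeft Fq (f 0 + g 0 * c) :=
        fun l => Lop_factor (a l) c f e (fun i hi => hfd i (by omega))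
      have hq1 : 1 ≤ qq := Fintype.card_pos
      have hTu : (Tw Fq (a l0) c) u = 0 := by
        rw [Tw_apply, hcdef]
        have : u ^ qq = u ^ (qq - 1) * u := by
          rw [← pow_succ, Nat.sub_add_cancel hq1]
        rw [this]; ring
      have hr : f 0 + g 0 * c = 0 := by
        have h0 : (Lop Fq (a l0) f (e+1)) u = 0 := hu_mem
        rw [hfac l0, LinearMap.add_apply, Module.End.mul_apply, hTu, map_zero,
          LinearMap.mulLeft_apply, zero_add] at h0
        exact (mul_eq_zero.mp h0).resolve_right hu_ne
      have hfac' : ∀ l, Lop Fq (a l) f (e+1) = Lop Fq (a l) g e * Tw Fq (a l) c := by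
        intro l
        rw [hfac l, hr]
        simp
      have hgne : ∃ n, g n ≠ 0 := by
        by_contra hcon
        push_neg at hcon
        obtain ⟨n, hn⟩ := hfne
        exact hn (gdiv_eq_zero_imp c f e (fun i hi => hfd i (by omega)) hcon hr n)
      have hIH := ih g (fun n hn => gdiv_top c f e n hn) hgne
      have hTw : ∑ l, finrank Fq (LinearMap.ker (Tw Fq (a l) c)) ≤ 1 := by
        have hbd : ∀ l ∈ Finset.univ,
            finrank Fq (LinearMap.ker (Tw Fq (a l) c)) ≤ if l = l0 then 1 else 0 := by
          intro l _
          by_cases hl : l = l0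
          · subst hl
            rw [if_pos rfl]
            have hle := ker_tw_le_span (Fq := Fq) (ha l) hu_ne
            rw [← hcdef] at hle
            calc finrank Fq (LinearMap.ker (Tw Fq (a l) c))
                ≤ finrank Fq (Submodule.span Fq {u}) := Submodule.finrank_mono hle
              _ = 1 := finrank_span_singleton hu_ne
          · rw [if_neg hl]
            have : LinearMap.ker (Tw Fq (a l) c) = ⊥ := by
              rw [LinearMap.ker_eq_bot']
              intro x hx
              by_contra hx0
              have hc1 : c = a l * x ^ (qq - 1) :=
                ker_tw_elem hx0 (LinearMap.mem_ker.mpr hx)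
              have hne : u * x⁻¹ ≠ 0 := by
                simp [hu_ne, hx0]
              apply hconj l l0 hl (u * x⁻¹) hne
              rw [hcdef] at hc1
              have hxp : (x : K) ^ (qq - 1) ≠ 0 := pow_ne_zero _ hx0
              calc a l = a l * x ^ (qq - 1) * (x ^ (qq - 1))⁻¹ := by field_simp
                _ = a l0 * u ^ (qq - 1) * (x ^ (qq - 1))⁻¹ := by rw [← hc1]
                _ = (u * x⁻¹) ^ (qq - 1) * a l0 := by rw [mul_pow, inv_pow]; ring
            rw [this]
            simp
        calc ∑ l, finrank Fq (LinearMap.ker (Tw Fq (a l) c))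
            ≤ ∑ l, if l = l0 then 1 else 0 := Finset.sum_le_sum hbd
          _ = 1 := by simp
      calc ∑ l, finrank Fq (LinearMap.ker (Lop Fq (a l) f (e+1)))
          ≤ ∑ l, (finrank Fq (LinearMap.ker (Lop Fq (a l) g e))
              + finrank Fq (LinearMap.ker (Tw Fq (a l) c))) := by
            apply Finset.sum_le_sum
            intro l _
            rw [hfac' l]
            exact finrank_ker_mul_le _ _
        _ = (∑ l, finrank Fq (LinearMap.ker (Lop Fq (a l) g e)))
              + ∑ l, finrank Fq (LinearMap.ker (Tw Fq (a l) c)) := Finset.sum_add_distrib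
        _ ≤ e + 1 := by omega

lemma finrank_ker_domRestrict_eq (L : Module.End Fq K) (W : Submodule Fq K) :
    finrank Fq (LinearMap.ker (L.domRestrict W))
      = finrank Fq (W ⊓ LinearMap.ker L : Submodule Fq K) := by
  have hinj := Submodule.injective_subtype W
  have heq := LinearEquiv.finrank_eq
    (Submodule.equivMapOfInjective W.subtype hinj (LinearMap.ker (L.domRestrict W)))
  rw [heq, LinearMap.ker_domRestrict, Submodule.map_comap_subtype]

lemma block_rank_nullity (L : Module.End Fq K) {n' : ℕ} (b : Fin n' → K)
    (hb : LinearIndependent Fq b) :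
    rankFq Fq (fun t => L (b t))
      + finrank Fq (Submodule.span Fq (Set.range b) ⊓ LinearMap.ker L : Submodule Fq K)
      = n' := by
  set W := Submodule.span Fq (Set.range b) with hW
  have h1 := LinearMap.finrank_range_add_finrank_ker (L.domRestrict W)
  rw [LinearMap.range_domRestrict, finrank_ker_domRestrict_eq] at h1
  have h2 : finrank Fq W = n' := by
    rw [hW, finrank_span_eq_card hb, Fintype.card_fin]
  have h3 : Submodule.span Fq (Set.range fun t => L (b t)) = W.map L := by
    rw [hW, ← Submodule.span_image, ← Set.range_comp]
    rfl
  show finrank Fq (Submodule.span Fq (Set.range fun t => L (b t)))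
      + finrank Fq (W ⊓ LinearMap.ker L : Submodule Fq K) = n'
  rw [h3]
  omega

lemma finrank_span_image_finset {n' : ℕ} {b : Fin n' → K} (hb : LinearIndependent Fq b)
    (s : Finset (Fin n')) :
    finrank Fq (Submodule.span Fq (b '' (s : Set (Fin n')))) = s.card := by
  classical
  have hcomp : LinearIndependent Fq (fun t : {t // t ∈ s} => b t.val) :=
    hb.comp _ Subtype.val_injective
  have h := finrank_span_eq_card hcomp
  rw [Fintype.card_coe] at h
  have hrange : Set.range (fun t : {t // t ∈ s} => b t.val) = b '' (s : Set (Fin n')) := by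
    rw [show (fun t : {t // t ∈ s} => b t.val) = b ∘ Subtype.val from rfl, Set.range_comp,
      Subtype.range_coe]
  rw [hrange] at h
  exact h

end FD

end LRS

/-- Linearized Reed–Solomon codes are MSRD: the row space of the matrix `G^LRS` with
entry `a_l^{(q^i−1)/(q−1)} β_{l,t}^{q^i}` in row `i ∈ {0,…,k−1}` and column `(l,t)` is a
`k`-dimensional code whose minimum sum-rank distance with respect to `(n_1,…,n_ℓ)`
equals `n − k + 1`. -/
theorem LRS_is_MSRD
    (q m ℓ k : ℕ) (nn : Fin ℓ → ℕ) (hℓ : 1 ≤ ℓ) (hℓq : ℓ ≤ q - 1)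
    (hnn : ∀ l, 1 ≤ nn l) (hnm : ∀ l, nn l ≤ m)
    (hk : 1 ≤ k) (hkn : k ≤ ∑ l, nn l)
    (Fq K : Type*) [Field Fq] [Fintype Fq] (hq : Fintype.card Fq = q)
    [Field K] [Algebra Fq K] (hm : Module.finrank Fq K = m)
    (a : Fin ℓ → K) (ha : ∀ l, a l ≠ 0)
    (hconj : ∀ l l', l ≠ l' → ∀ c : K, c ≠ 0 → a l ≠ c ^ (q - 1) * a l')
    (β : (l : Fin ℓ) → Fin (nn l) → K) (hβ : ∀ l, LinearIndependent Fq (β l))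
    (GLRS : Matrix (Fin k) ((l : Fin ℓ) × Fin (nn l)) K)
    (hGLRS : GLRS = Matrix.of fun (i : Fin k) (j : (l : Fin ℓ) × Fin (nn l)) =>
      a j.1 ^ ((q ^ (i : ℕ) - 1) / (q - 1)) * β j.1 j.2 ^ q ^ (i : ℕ)) :
    Module.finrank K (Submodule.span K (Set.range fun i : Fin k => GLRS i)) = k ∧
    (∀ c ∈ Submodule.span K (Set.range fun i : Fin k => GLRS i),
      c ≠ 0 → (∑ l, nn l) - k + 1 ≤ sumRankWt Fq c) ∧
    (∃ c ∈ Submodule.span K (Set.range fun i : Fin k => GLRS i),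
      c ≠ 0 ∧ sumRankWt Fq c = (∑ l, nn l) - k + 1) := by
  classical
  subst hq
  have hq2 : 2 ≤ Fintype.card Fq := Fintype.one_lt_card
  have hm1 : 1 ≤ m := le_trans (hnn ⟨0, hℓ⟩) (hnm ⟨0, hℓ⟩)
  haveI : FiniteDimensional Fq K := FiniteDimensional.of_finrank_pos (by rw [hm]; omega)
  set n := ∑ l, nn l with hn
  -- entries of the generator matrix
  have hentry : ∀ (i : Fin k) (j : (l : Fin ℓ) × Fin (nn l)),
      GLRS i j = Nrm Fq (i : ℕ) (a j.1) * β j.1 j.2 ^ Fintype.card Fq ^ (i : ℕ) := by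
    intro i j
    rw [hGLRS]
    show a j.1 ^ ((Fintype.card Fq ^ (i : ℕ) - 1) / (Fintype.card Fq - 1)) * _ = _
    rw [Nrm, ← Nat.geomSum_eq hq2]
  -- extension of coefficient vectors
  set wext : (Fin k → K) → ℕ → K := fun w n => if h : n < k then w ⟨n, h⟩ else 0 with hwext
  have hwext_deg : ∀ w : Fin k → K, ∀ n, k - 1 < n → wext w n = 0 := by
    intro w nn hnn'
    rw [hwext]
    exact dif_neg (by omega)
  have hwext_ne : ∀ w : Fin k → K, w ≠ 0 → ∃ n, wext w n ≠ 0 := by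
    intro w hw
    obtain ⟨i, hi⟩ := Function.ne_iff.mp hw
    refine ⟨i, ?_⟩
    rw [hwext]
    simpa [i.isLt] using hi
  -- evaluation of codewords via the operators
  have hval : ∀ (w : Fin k → K) (j : (l : Fin ℓ) × Fin (nn l)),
      (∑ i, w i • GLRS i) j = (Lop Fq (a j.1) (wext w) (k-1)) (β j.1 j.2) := by
    intro w j
    rw [Lop_apply]
    have hk1 : k - 1 + 1 = k := by omega
    rw [hk1, Finset.sum_apply,
      ← Fin.sum_univ_eq_sum_range
        (fun n => wext w n * Nrm Fq n (a j.1) * β j.1 j.2 ^ Fintype.card Fq ^ n) k]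
    apply Finset.sum_congr rfl
    intro i _
    rw [Pi.smul_apply, smul_eq_mul, hentry i j]
    have hwi : wext w (i : ℕ) = w i := by rw [hwext]; simp
    rw [hwi]
    ring
  -- linear independence of the rows
  have hrows : LinearIndependent K (fun i : Fin k => GLRS i) := by
    rw [Fintype.linearIndependent_iff]
    intro w hw
    by_contra hcon
    push_neg at hcon
    obtain ⟨i0, hi0⟩ := hcon
    have hwne : w ≠ 0 := fun h => hi0 (by rw [h]; rfl)
    have hroot := rootBound a ha hconj (k-1) (wext w) (hwext_deg w) (hwext_ne w hwne)
    have hle : ∀ l ∈ Finset.univ, nn l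
        ≤ Module.finrank Fq (LinearMap.ker (Lop Fq (a l) (wext w) (k-1))) := by
      intro l _
      have hspan : Submodule.span Fq (Set.range (β l))
          ≤ LinearMap.ker (Lop Fq (a l) (wext w) (k-1)) := by
        rw [Submodule.span_le]
        rintro x ⟨t, rfl⟩
        have h1 := hval w ⟨l, t⟩
        rw [hw] at h1
        exact LinearMap.mem_ker.mpr ((Pi.zero_apply _).symm.trans h1).symm
      calc nn l = Module.finrank Fq (Submodule.span Fq (Set.range (β l))) := by
            rw [finrank_span_eq_card (hβ l), Fintype.card_fin]
        _ ≤ _ := Submodule.finrank_mono hspan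
    have hcontr : n ≤ k - 1 := le_trans (Finset.sum_le_sum hle) hroot
    omega
  have hdim : Module.finrank K (Submodule.span K (Set.range fun i : Fin k => GLRS i)) = k := by
    rw [finrank_span_eq_card hrows, Fintype.card_fin]
  -- the per-codeword block decomposition
  have hblock : ∀ (w : Fin k → K) (l : Fin ℓ),
      rankFq Fq (fun t => (∑ i, w i • GLRS i) ⟨l, t⟩)
        + Module.finrank Fq (Submodule.span Fq (Set.range (β l))
            ⊓ LinearMap.ker (Lop Fq (a l) (wext w) (k-1)) : Submodule Fq K) = nn l := by
    intro w l
    have hfun : (fun t => (∑ i, w i • GLRS i) ⟨l, t⟩)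
        = fun t => (Lop Fq (a l) (wext w) (k-1)) (β l t) := by
      funext t
      exact hval w ⟨l, t⟩
    rw [hfun]
    exact block_rank_nullity _ (β l) (hβ l)
  -- the lower bound for all nonzero codewords
  have hlower : ∀ c ∈ Submodule.span K (Set.range fun i : Fin k => GLRS i),
      c ≠ 0 → n - k + 1 ≤ sumRankWt Fq c := by
    intro c hc hcne
    obtain ⟨w, hwsum⟩ := (Submodule.mem_span_range_iff_exists_fun K).mp hc
    have hwne : w ≠ 0 := by
      rintro rfl
      apply hcne
      rw [← hwsum]
      simp
    have hroot := rootBound a ha hconj (k-1) (wext w) (hwext_deg w) (hwext_ne w hwne)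
    have hsum1 : sumRankWt Fq c
        + ∑ l, Module.finrank Fq (Submodule.span Fq (Set.range (β l))
            ⊓ LinearMap.ker (Lop Fq (a l) (wext w) (k-1)) : Submodule Fq K) = n := by
      rw [show sumRankWt Fq c = ∑ l, rankFq Fq (fun t => c ⟨l, t⟩) from rfl,
        ← Finset.sum_add_distrib]
      rw [hn]
      apply Finset.sum_congr rfl
      intro l _
      rw [← hwsum]
      exact hblock w l
    have hsum2 : ∑ l, Module.finrank Fq (Submodule.span Fq (Set.range (β l))
            ⊓ LinearMap.ker (Lop Fq (a l) (wext w) (k-1)) : Submodule Fq K) ≤ k - 1 := by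
      refine le_trans (Finset.sum_le_sum ?_) hroot
      intro l _
      exact Submodule.finrank_mono inf_le_right
    omega
  refine ⟨hdim, hlower, ?_⟩
  -- existence of a minimum-weight codeword
  obtain ⟨J, -, hJcard⟩ := Finset.exists_subset_card_eq
    (show k-1 ≤ (Finset.univ : Finset ((l : Fin ℓ) × Fin (nn l))).card by rw [Finset.card_univ, Fintype.card_sigma]; simp only [Fintype.card_fin]; omega)
  -- a nonzero coefficient vector vanishing on the columns in J
  set M : (Fin k → K) →ₗ[K] ((j : J) → K) :=
    LinearMap.pi (fun j => ∑ i : Fin k, GLRS i j.1 • LinearMap.proj i) with hM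
  have hnotinj : ¬ Function.Injective M := by
    intro hinj
    have hlek := LinearMap.finrank_le_finrank_of_injective hinj
    rw [Module.finrank_pi, Module.finrank_pi, Fintype.card_coe, Fintype.card_fin, hJcard] at hlek
    omega
  obtain ⟨x, y, hxy, hne⟩ := Function.not_injective_iff.mp hnotinj
  set w : Fin k → K := x - y with hwdef
  have hwne : w ≠ 0 := sub_ne_zero.mpr hne
  have hMw : M w = 0 := by rw [hwdef, map_sub, hxy, sub_self]
  set c : ((l : Fin ℓ) × Fin (nn l)) → K := ∑ i, w i • GLRS i with hcdef
  have hcmem : c ∈ Submodule.span K (Set.range fun i : Fin k => GLRS i) :=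
    Submodule.sum_mem _ (fun i _ =>
      Submodule.smul_mem _ _ (Submodule.subset_span ⟨i, rfl⟩))
  have hcne : c ≠ 0 := by
    intro h
    apply hwne
    funext i
    exact Fintype.linearIndependent_iff.mp hrows w (hcdef ▸ h) i
  have hczero : ∀ j ∈ J, c j = 0 := by
    intro j hj
    have h1 := congrFun hMw ⟨j, hj⟩
    rw [hM] at h1
    simp only [LinearMap.pi_apply, LinearMap.sum_apply, LinearMap.smul_apply,
      LinearMap.proj_apply, Pi.zero_apply, smul_eq_mul] at h1
    rw [hcdef, Finset.sum_apply]
    rw [← h1]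
    apply Finset.sum_congr rfl
    intro i _
    rw [Pi.smul_apply, smul_eq_mul, mul_comm]
  -- the sliced column sets
  set T : (l : Fin ℓ) → Finset (Fin (nn l)) :=
    fun l => Finset.univ.filter (fun t => (⟨l, t⟩ : (l : Fin ℓ) × Fin (nn l)) ∈ J) with hT
  have hJT : J = Finset.univ.sigma (fun l => T l) := by
    ext ⟨l, t⟩
    simp [hT]
  have hTcard : ∑ l, (T l).card = k - 1 := by
    rw [← hJcard, hJT, Finset.card_sigma]
  have hTker : ∀ l, (T l).card
      ≤ Module.finrank Fq (Submodule.span Fq (Set.range (β l))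
          ⊓ LinearMap.ker (Lop Fq (a l) (wext w) (k-1)) : Submodule Fq K) := by
    intro l
    rw [← finrank_span_image_finset (hβ l) (T l)]
    apply Submodule.finrank_mono
    rw [Submodule.span_le]
    rintro v ⟨t, ht, rfl⟩
    rw [SetLike.mem_coe, Submodule.mem_inf]
    constructor
    · exact Submodule.subset_span ⟨t, rfl⟩
    · have htJ : (⟨l, t⟩ : (l : Fin ℓ) × Fin (nn l)) ∈ J := by
        have := ht
        rw [hT] at this
        simpa using this
      have h2 := hval w ⟨l, t⟩
      rw [← hcdef] at h2
      rw [LinearMap.mem_ker, ← h2]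
      exact hczero _ htJ
  have hupper : sumRankWt Fq c
      + ∑ l, Module.finrank Fq (Submodule.span Fq (Set.range (β l))
          ⊓ LinearMap.ker (Lop Fq (a l) (wext w) (k-1)) : Submodule Fq K) = n := by
    rw [show sumRankWt Fq c = ∑ l, rankFq Fq (fun t => c ⟨l, t⟩) from rfl,
      ← Finset.sum_add_distrib, hn]
    apply Finset.sum_congr rfl
    intro l _
    rw [hcdef]
    exact hblock w l
  have hge : ∑ l, Module.finrank Fq (Submodule.span Fq (Set.range (β l))
      ⊓ LinearMap.ker (Lop Fq (a l) (wext w) (k-1)) : Submodule Fq K) ≥ k - 1 :=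
    calc k - 1 = ∑ l, (T l).card := hTcard.symm
      _ ≤ _ := Finset.sum_le_sum (fun l _ => hTker l)
  have hlow := hlower c hcmem hcne
  exact ⟨c, hcmem, hcne, by omega⟩
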